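/- Suppose there exist a vector v and real numbers a, b such that ⟪v, x_k⟫ = a and ⟪v, y_k⟫ = b for all k = 1,…,N, and suppose Σ_{k=1}^N Q^x(k,i) = 1 for every i and Σ_{k=1}^N Q^y(i,k) = 1 for every i (double stochasticity of Q^x and Q^y). Then for every i, ⟪v, ∇_{y_i}L⟫ = 0 and ⟪v, ∇_{x_i}L⟫ = 0: the gradient of the contrastive loss has no component in the direction v. -/

import Mathlib

/-!
STATEMENT 3: If the projections of both modalities onto `v` are constant (`⟪v, x_k⟫ = a`,
`⟪v, y_k⟫ = b`) and `Q^x`, `Q^y` are doubly stochastic (`Σ_k Q^x(k,i) = 1` and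
`Σ_k Q^y(i,k) = 1`), then for every `i` the gradient of the contrastive loss with respect
to `y_i` (resp. `x_i`) has no component in the direction `v`.
-/

open RealInnerProductSpace

/-- Softmax assignment matrix `Q^x(i,j)` (rows sum to one). -/
noncomputable def Qx {d N : ℕ} (τ : ℝ) (x y : Fin N → EuclideanSpace ℝ (Fin d))
    (i j : Fin N) : ℝ :=
  Real.exp (-‖x i - y j‖ ^ 2 / τ) / ∑ j', Real.exp (-‖x i - y j'‖ ^ 2 / τ)

/-- Softmax assignment matrix `Q^y(i,j)` (columns sum to one). -/
noncomputable def Qy {d N : ℕ} (τ : ℝ) (x y : Fin N → EuclideanSpace ℝ (Fin d))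
    (i j : Fin N) : ℝ :=
  Real.exp (-‖x i - y j‖ ^ 2 / τ) / ∑ i', Real.exp (-‖x i' - y j‖ ^ 2 / τ)

/-- The multimodal contrastive loss
`L = −(1/N) Σ_i (log Q^x(i,i) + log Q^y(i,i))`. -/
noncomputable def contrastiveLoss {d N : ℕ} (τ : ℝ)
    (x y : Fin N → EuclideanSpace ℝ (Fin d)) : ℝ :=
  -(1 / (N : ℝ)) * ∑ i, (Real.log (Qx τ x y i i) + Real.log (Qy τ x y i i))

section helpers

variable {d N : ℕ}

local notation "E" => EuclideanSpace ℝ (Fin d)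

lemma base_deriv (τ : ℝ) (u p : E) :
    HasFDerivAt (fun z : E => -‖u - z‖ ^ 2 / τ) ((2 / τ) • innerSL ℝ (u - p)) p := by
  have h := (HasFDerivAt.fun_neg (HasFDerivAt.const_sub (hasFDerivAt_id (𝕜 := ℝ) p) u).norm_sq).const_mul (τ⁻¹)
  simp only [div_eq_inv_mul]
  refine h.congr_fderiv ?_
  ext w
  simp [real_inner_smul_left, div_eq_mul_inv]
  ring

lemma Qy_eq_Qx_swap (τ : ℝ) (x y : Fin N → E) (i j : Fin N) :
    Qy τ x y i j = Qx τ y x j i := by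
  unfold Qx Qy
  simp [norm_sub_rev (y j)]

lemma loss_swap (τ : ℝ) (x y : Fin N → E) :
    contrastiveLoss τ x y = contrastiveLoss τ y x := by
  unfold contrastiveLoss
  congr 1
  refine Finset.sum_congr rfl fun j _ => ?_
  rw [Qy_eq_Qx_swap, ← Qy_eq_Qx_swap (x := y)]
  ring

end helpers

section main

variable {d N : ℕ}

local notation "E" => EuclideanSpace ℝ (Fin d)

lemma main_grad (hN : 0 < N) {τ : ℝ} (hτ : 0 < τ)
    (x y : Fin N → E) (v : E) (a b : ℝ)
    (hva : ∀ k, ⟪v, x k⟫ = a) (hvb : ∀ k, ⟪v, y k⟫ = b)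
    (hQx : ∀ i, ∑ k, Qx τ x y k i = 1) (i : Fin N) :
    ⟪v, gradient (fun z => contrastiveLoss τ x (Function.update y i z)) (y i)⟫ = 0 := by
  haveI : Nonempty (Fin N) := ⟨⟨0, hN⟩⟩
  set Ψ : E → Fin N → (E →L[ℝ] ℝ) :=
    fun u k => if k = i then (2 / τ) • innerSL ℝ (u - y i) else 0 with hΨ
  have hupd : ∀ (u : E) (k : Fin N),
      HasFDerivAt (fun z : E => -‖u - Function.update y i z k‖ ^ 2 / τ) (Ψ u k) (y i) := by
    intro u k
    by_cases hk : k = i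
    · subst hk
      simp only [hΨ, if_pos rfl, Function.update_self]
      exact base_deriv τ u (y k)
    · simp only [hΨ, Function.update_of_ne hk, if_neg hk]
      exact hasFDerivAt_const _ _
  have hupde : ∀ (u : E) (k : Fin N),
      HasFDerivAt (fun z : E => Real.exp (-‖u - Function.update y i z k‖ ^ 2 / τ))
        (Real.exp (-‖u - y k‖ ^ 2 / τ) • Ψ u k) (y i) := by
    intro u k
    have := (hupd u k).exp
    simpa [Function.update_eq_self] using this
  have hposX : ∀ j, (0:ℝ) < ∑ k, Real.exp (-‖x j - y k‖ ^ 2 / τ) :=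
    fun j => Finset.sum_pos (fun k _ => Real.exp_pos _) Finset.univ_nonempty
  have hposY : ∀ j, (0:ℝ) < ∑ k, Real.exp (-‖x k - y j‖ ^ 2 / τ) :=
    fun j => Finset.sum_pos (fun k _ => Real.exp_pos _) Finset.univ_nonempty
  have hXlog : ∀ j, HasFDerivAt
      (fun z : E => Real.log (∑ k, Real.exp (-‖x j - Function.update y i z k‖ ^ 2 / τ)))
      ((∑ k, Real.exp (-‖x j - y k‖ ^ 2 / τ))⁻¹ •
        ∑ k, Real.exp (-‖x j - y k‖ ^ 2 / τ) • Ψ (x j) k) (y i) := by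
    intro j
    have hs : HasFDerivAt
        (fun z : E => ∑ k, Real.exp (-‖x j - Function.update y i z k‖ ^ 2 / τ))
        (∑ k, Real.exp (-‖x j - y k‖ ^ 2 / τ) • Ψ (x j) k) (y i) :=
      HasFDerivAt.fun_sum fun k _ => hupde (x j) k
    have := hs.log (by simpa [Function.update_eq_self] using (hposX j).ne')
    simpa [Function.update_eq_self] using this
  have hYlog : ∀ j, HasFDerivAt
      (fun z : E => Real.log (∑ k, Real.exp (-‖x k - Function.update y i z j‖ ^ 2 / τ)))
      ((∑ k, Real.exp (-‖x k - y j‖ ^ 2 / τ))⁻¹ •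
        ∑ k, Real.exp (-‖x k - y j‖ ^ 2 / τ) • Ψ (x k) j) (y i) := by
    intro j
    have hs : HasFDerivAt
        (fun z : E => ∑ k, Real.exp (-‖x k - Function.update y i z j‖ ^ 2 / τ))
        (∑ k, Real.exp (-‖x k - y j‖ ^ 2 / τ) • Ψ (x k) j) (y i) :=
      HasFDerivAt.fun_sum fun k _ => hupde (x k) j
    have := hs.log (by simpa [Function.update_eq_self] using (hposY j).ne')
    simpa [Function.update_eq_self] using this
  have hF : HasFDerivAt
      (fun z : E => -(1 / (N:ℝ)) * ∑ j,
        ((-‖x j - Function.update y i z j‖ ^ 2 / τ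
            - Real.log (∑ k, Real.exp (-‖x j - Function.update y i z k‖ ^ 2 / τ)))
          + (-‖x j - Function.update y i z j‖ ^ 2 / τ
            - Real.log (∑ k, Real.exp (-‖x k - Function.update y i z j‖ ^ 2 / τ)))))
      (-(1 / (N:ℝ)) • ∑ j,
        ((Ψ (x j) j - (∑ k, Real.exp (-‖x j - y k‖ ^ 2 / τ))⁻¹ •
            ∑ k, Real.exp (-‖x j - y k‖ ^ 2 / τ) • Ψ (x j) k)
          + (Ψ (x j) j - (∑ k, Real.exp (-‖x k - y j‖ ^ 2 / τ))⁻¹ •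
            ∑ k, Real.exp (-‖x k - y j‖ ^ 2 / τ) • Ψ (x k) j)))
      (y i) :=
    (HasFDerivAt.fun_sum fun j _ =>
      ((hupd (x j) j).fun_sub (hXlog j)).fun_add ((hupd (x j) j).fun_sub (hYlog j))).const_mul _
  have hfun : (fun z => contrastiveLoss τ x (Function.update y i z)) =
      (fun z : E => -(1 / (N:ℝ)) * ∑ j,
        ((-‖x j - Function.update y i z j‖ ^ 2 / τ
            - Real.log (∑ k, Real.exp (-‖x j - Function.update y i z k‖ ^ 2 / τ)))
          + (-‖x j - Function.update y i z j‖ ^ 2 / τ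
            - Real.log (∑ k, Real.exp (-‖x k - Function.update y i z j‖ ^ 2 / τ))))) := by
    funext z
    unfold contrastiveLoss Qx Qy
    congr 1
    refine Finset.sum_congr rfl fun j _ => ?_
    rw [Real.log_div (Real.exp_ne_zero _)
          (ne_of_gt (Finset.sum_pos (fun k _ => Real.exp_pos _) Finset.univ_nonempty)),
        Real.log_div (Real.exp_ne_zero _)
          (ne_of_gt (Finset.sum_pos (fun k _ => Real.exp_pos _) Finset.univ_nonempty))]
    simp only [Real.log_exp]
  rw [real_inner_comm, hfun]
  unfold gradient
  rw [InnerProductSpace.toDual_symm_apply, hF.fderiv]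
  have hκ : ∀ (u : E) (k : Fin N),
      Ψ u k v = if k = i then (2 / τ) * (⟪v, u⟫ - b) else 0 := by
    intro u k
    by_cases hk : k = i
    · subst hk
      simp only [hΨ, if_pos rfl, if_true, ContinuousLinearMap.smul_apply, innerSL_apply_apply,
        smul_eq_mul, inner_sub_left]
      rw [real_inner_comm v u, real_inner_comm v (y k), hvb]
    · simp [hΨ, hk]
  simp only [ContinuousLinearMap.smul_apply, ContinuousLinearMap.sum_apply,
    ContinuousLinearMap.add_apply, ContinuousLinearMap.sub_apply, hκ, hva, smul_eq_mul]
  have h1 : ∀ j ∈ Finset.univ, ((if j = i then (2 / τ) * (a - b) else 0)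
        - (∑ k, Real.exp (-‖x j - y k‖ ^ 2 / τ))⁻¹ *
          (∑ k, Real.exp (-‖x j - y k‖ ^ 2 / τ) * (if k = i then (2 / τ) * (a - b) else 0))
      + ((if j = i then (2 / τ) * (a - b) else 0)
        - (∑ k, Real.exp (-‖x k - y j‖ ^ 2 / τ))⁻¹ *
          (∑ k, Real.exp (-‖x k - y j‖ ^ 2 / τ) * (if j = i then (2 / τ) * (a - b) else 0))))
      = (if j = i then (2 / τ) * (a - b) else 0) - Qx τ x y j i * ((2 / τ) * (a - b)) := by
    intro j _
    by_cases hj : j = i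
    · subst hj
      simp only [if_pos rfl, mul_ite, mul_zero, Finset.sum_ite_eq', Finset.mem_univ, if_true,
        ← Finset.sum_mul, Qx]
      rw [inv_mul_cancel_left₀ (hposY j).ne']
      ring
    · simp only [if_neg hj, mul_ite, mul_zero, Finset.sum_ite_eq', Finset.mem_univ, if_true,
        Finset.sum_const_zero, Qx]
      ring
  rw [Finset.sum_congr rfl h1, Finset.sum_sub_distrib, Finset.sum_ite_eq', ← Finset.sum_mul,
    hQx i]
  simp

end main

theorem gradient_orthogonal_to_constant_direction
    (d N : ℕ) (hd : 0 < d) (hN : 0 < N) (τ : ℝ) (hτ : 0 < τ)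
    (x y : Fin N → EuclideanSpace ℝ (Fin d))
    (v : EuclideanSpace ℝ (Fin d)) (a b : ℝ)
    (hva : ∀ k, ⟪v, x k⟫ = a) (hvb : ∀ k, ⟪v, y k⟫ = b)
    (hQx : ∀ i, ∑ k, Qx τ x y k i = 1)
    (hQy : ∀ i, ∑ k, Qy τ x y i k = 1) :
    ∀ i, ⟪v, gradient (fun z => contrastiveLoss τ x (Function.update y i z)) (y i)⟫ = 0 ∧
      ⟪v, gradient (fun z => contrastiveLoss τ (Function.update x i z) y) (x i)⟫ = 0 := by
  intro i
  constructor
  · exact main_grad hN hτ x y v a b hva hvb hQx i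
  · have hswap : (fun z => contrastiveLoss τ (Function.update x i z) y)
        = fun z => contrastiveLoss τ y (Function.update x i z) :=
      funext fun z => loss_swap τ _ y
    rw [hswap]
    refine main_grad hN hτ y x v b a hvb hva (fun j => ?_) i
    rw [Finset.sum_congr rfl fun k _ => (Qy_eq_Qx_swap τ x y j k).symm]
    exact hQy j
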